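/- Let V(t) = (1/2)s(t)² + (1/2)d̃(t)² + (1/2)k̃(t)² where s, d̃, k̃ : [0,∞) → ℝ are differentiable and satisfy ṡ = d̃ − κs, ḋ̃ = ḋ − λd̃ − k̂·sgn(d̃) − s with |ḋ| ≤ k, and k̇̃ = −(−τk̂ + μ|s|) with k̂ = k − k̃, k̂(t) ≥ 0. If κ > μ/2, λ > 1/2, and τ > μ + 1, then V̇(t) ≤ −γ·V(t) + (1/2)τk², where γ = min{κ − μ/2, λ − 1/2, (τ − μ − 1)/2} > 0. -/

import Mathlib

set_option maxHeartbeats 2000000 in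
theorem lyapunov_derivative_estimate
    (s dtilde ktilde khat d d' : ℝ → ℝ) (κ lam τ μ k : ℝ)
    (hκpos : 0 < κ) (hlampos : 0 < lam) (hτpos : 0 < τ) (hμpos : 0 < μ)
    (hk : 0 ≤ k)
    (hd : ∀ t, HasDerivAt d (d' t) t)
    (hd' : ∀ t, |d' t| ≤ k)
    (hs : ∀ t, HasDerivAt s (dtilde t - κ * s t) t)
    (hdtilde : ∀ t, HasDerivAt dtilde
      (d' t - lam * dtilde t - khat t * Real.sign (dtilde t) - s t) t)
    (hktilde : ∀ t, HasDerivAt ktilde (-(-τ * khat t + μ * |s t|)) t)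
    (hkhat : ∀ t, khat t = k - ktilde t)
    (hkhatpos : ∀ t, 0 ≤ khat t)
    (hκ : μ / 2 < κ) (hlam : 1 / 2 < lam) (hτ : μ + 1 < τ) :
    0 < min (κ - μ / 2) (min (lam - 1 / 2) ((τ - μ - 1) / 2)) ∧
    ∀ t, deriv (fun u => s u ^ 2 / 2 + dtilde u ^ 2 / 2 + ktilde u ^ 2 / 2) t ≤
      -(min (κ - μ / 2) (min (lam - 1 / 2) ((τ - μ - 1) / 2))) *
        (s t ^ 2 / 2 + dtilde t ^ 2 / 2 + ktilde t ^ 2 / 2) + (1 / 2) * τ * k ^ 2 := by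
  set γ := min (κ - μ / 2) (min (lam - 1 / 2) ((τ - μ - 1) / 2)) with hγdef
  have hγ1 : γ ≤ κ - μ / 2 := min_le_left _ _
  have hγ2 : γ ≤ lam - 1 / 2 := le_trans (min_le_right _ _) (min_le_left _ _)
  have hγ3 : γ ≤ (τ - μ - 1) / 2 := le_trans (min_le_right _ _) (min_le_right _ _)
  have hγpos : 0 < γ := by
    apply lt_min (by linarith) (lt_min (by linarith) (by linarith))
  refine ⟨hγpos, fun t => ?_⟩
  have hV : HasDerivAt (fun u => s u ^ 2 / 2 + dtilde u ^ 2 / 2 + ktilde u ^ 2 / 2)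
      (s t * (dtilde t - κ * s t)
        + dtilde t * (d' t - lam * dtilde t - khat t * Real.sign (dtilde t) - s t)
        + ktilde t * (-(-τ * khat t + μ * |s t|))) t := by
    have h1 := (((hs t).pow 2).div_const 2)
    have h2 := (((hdtilde t).pow 2).div_const 2)
    have h3 := (((hktilde t).pow 2).div_const 2)
    have := (h1.add h2).add h3
    refine this.congr_deriv ?_
    push_cast
    ring
  rw [hV.deriv]
  -- key facts
  have hsign : dtilde t * Real.sign (dtilde t) = |dtilde t| := by
    rcases lt_trichotomy (dtilde t) 0 with h | h | h
    · rw [Real.sign_of_neg h, abs_of_neg h]; ring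
    · simp [h]
    · rw [Real.sign_of_pos h, abs_of_pos h]; ring
  have h1 : dtilde t * d' t ≤ k * |dtilde t| := by
    calc dtilde t * d' t ≤ |dtilde t * d' t| := le_abs_self _
      _ = |dtilde t| * |d' t| := abs_mul _ _
      _ ≤ |dtilde t| * k := by
          exact mul_le_mul_of_nonneg_left (hd' t) (abs_nonneg _)
      _ = k * |dtilde t| := by ring
  have hkh := hkhat t
  have hkhp := hkhatpos t
  have habs_d : (|dtilde t|) ^ 2 = dtilde t ^ 2 := sq_abs _
  have habs_s : (|s t|) ^ 2 = s t ^ 2 := sq_abs _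
  have habs_dnn : 0 ≤ |dtilde t| := abs_nonneg _
  have habs_snn : 0 ≤ |s t| := abs_nonneg _
  -- (k - khat) = ktilde
  have hkt : ktilde t = k - khat t := by linarith [hkh]
  -- ktilde*|d| ≤ (ktilde^2 + d^2)/2 etc.
  have hb1 : ktilde t * |dtilde t| ≤ (ktilde t ^ 2 + dtilde t ^ 2) / 2 := by
    nlinarith [sq_nonneg (|dtilde t| - ktilde t)]
  have hb2 : -(ktilde t * |s t|) ≤ (ktilde t ^ 2 + s t ^ 2) / 2 := by
    nlinarith [sq_nonneg (|s t| + ktilde t)]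
  have hb3 : τ * (ktilde t * khat t) ≤ τ * k ^ 2 / 2 - τ * ktilde t ^ 2 / 2 := by
    have : ktilde t * khat t = k * ktilde t - ktilde t ^ 2 := by rw [hkh]; ring
    rw [this]
    nlinarith [sq_nonneg (k - ktilde t), hτpos]
  have hsign2 : dtilde t * (khat t * Real.sign (dtilde t)) = khat t * |dtilde t| := by
    rw [mul_comm (khat t), ← mul_assoc, hsign]; ring
  have hμb2 := mul_le_mul_of_nonneg_left hb2 hμpos.le
  have hsq1 : 0 ≤ s t ^ 2 := sq_nonneg _
  have hsq2 : 0 ≤ dtilde t ^ 2 := sq_nonneg _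
  have hsq3 : 0 ≤ ktilde t ^ 2 := sq_nonneg _
  have hp1 : γ * (s t ^ 2 / 2) ≤ (κ - μ / 2) * s t ^ 2 := by
    have h := mul_le_mul_of_nonneg_right hγ1 (div_nonneg hsq1 (by norm_num : (0:ℝ) ≤ 2))
    have h2 : 0 ≤ (κ - μ / 2) * s t ^ 2 := mul_nonneg (by linarith) hsq1
    linarith
  have hp2 : γ * (dtilde t ^ 2 / 2) ≤ (lam - 1 / 2) * dtilde t ^ 2 := by
    have h := mul_le_mul_of_nonneg_right hγ2 (div_nonneg hsq2 (by norm_num : (0:ℝ) ≤ 2))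
    have h2 : 0 ≤ (lam - 1 / 2) * dtilde t ^ 2 := mul_nonneg (by linarith) hsq2
    linarith
  have hp3 : γ * (ktilde t ^ 2 / 2) ≤ ((τ - μ - 1) / 2) * ktilde t ^ 2 := by
    have h := mul_le_mul_of_nonneg_right hγ3 (div_nonneg hsq3 (by norm_num : (0:ℝ) ≤ 2))
    have h2 : 0 ≤ ((τ - μ - 1) / 2) * ktilde t ^ 2 := mul_nonneg (by linarith) hsq3
    linarith
  have hkd : 0 ≤ khat t * |dtilde t| := mul_nonneg hkhp habs_dnn
  have e : ktilde t * |dtilde t| = k * |dtilde t| - khat t * |dtilde t| := by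
    rw [hkt]; ring
  linarith [hsign2, h1, hb1, hb3, hμb2, hp1, hp2, hp3, hkd, e]
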